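/- Let V and H be real inner product spaces and D : V → H a linear map. Let f̃ and f̃_h be linear functionals on V, and suppose C ≥ 0 is such that |(f̃ − f̃_h)(v)| ≤ C ‖D v‖ for all v ∈ V. Assume ũ ∈ V satisfies ⟨D ũ, D w⟩ = f̃(w) for all w ∈ V, there exists û ∈ V with ⟨D û, D w⟩ = f̃_h(w) for all w ∈ V, and σ̃ ∈ H satisfies ⟨σ̃, D w⟩ = f̃_h(w) for all w ∈ V. Then for every s̃ ∈ V the dual data oscillation obeys |(f̃ − f̃_h)(ũ − s̃)| ≤ C ( C + ‖D s̃ − σ̃‖ ). -/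

import Mathlib

open RealInnerProductSpace

lemma norm_le_of_sq_le {H : Type*} [NormedAddCommGroup H] (x : H) (a : ℝ)
    (ha : 0 ≤ a) (h : ‖x‖ ^ 2 ≤ a * ‖x‖) : ‖x‖ ≤ a := by
  rcases eq_or_lt_of_le (norm_nonneg x) with h0 | h0
  · simpa [← h0] using ha
  · nlinarith

/-- Computable bound (4.20) on the dual data oscillation. -/
theorem dual_oscillation_bound
    {V H : Type*} [NormedAddCommGroup V] [InnerProductSpace ℝ V]
    [NormedAddCommGroup H] [InnerProductSpace ℝ H]
    (D : V →ₗ[ℝ] H) (ftilde ftildeh : V →ₗ[ℝ] ℝ) (C : ℝ) (hC : 0 ≤ C)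
    (hpert : ∀ v : V, |(ftilde - ftildeh) v| ≤ C * ‖D v‖)
    (utilde : V) (σtilde : H)
    (hutilde : ∀ w : V, ⟪D utilde, D w⟫ = ftilde w)
    (huhat : ∃ uhat : V, ∀ w : V, ⟪D uhat, D w⟫ = ftildeh w)
    (hσtilde : ∀ w : V, ⟪σtilde, D w⟫ = ftildeh w)
    (stilde : V) :
    |(ftilde - ftildeh) (utilde - stilde)| ≤ C * (C + ‖D stilde - σtilde‖) := by
  obtain ⟨uhat, huhat⟩ := huhat
  -- ‖D(ũ−û)‖ ≤ C
  have h1 : ‖D utilde - D uhat‖ ≤ C := by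
    apply norm_le_of_sq_le _ _ hC
    have : ⟪D utilde - D uhat, D (utilde - uhat)⟫ = (ftilde - ftildeh) (utilde - uhat) := by
      simp only [map_sub, inner_sub_left, inner_sub_right, hutilde, huhat, LinearMap.sub_apply]
    calc ‖D utilde - D uhat‖ ^ 2
        = ⟪D utilde - D uhat, D utilde - D uhat⟫ := by
          rw [real_inner_self_eq_norm_sq]
      _ = (ftilde - ftildeh) (utilde - uhat) := by
          rw [← this]; congr 1; simp [map_sub]
      _ ≤ |(ftilde - ftildeh) (utilde - uhat)| := le_abs_self _
      _ ≤ C * ‖D (utilde - uhat)‖ := hpert _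
      _ = C * ‖D utilde - D uhat‖ := by rw [map_sub]
  -- ‖D û − D s̃‖ ≤ ‖D s̃ − σ̃‖
  have h2 : ‖D uhat - D stilde‖ ≤ ‖D stilde - σtilde‖ := by
    apply norm_le_of_sq_le _ _ (norm_nonneg _)
    have horth : ⟪D uhat - σtilde, D (uhat - stilde)⟫ = 0 := by
      simp only [map_sub, inner_sub_left, inner_sub_right, huhat, hσtilde]; ring
    calc ‖D uhat - D stilde‖ ^ 2
        = ⟪D uhat - D stilde, D uhat - D stilde⟫ := by
          rw [real_inner_self_eq_norm_sq]
      _ = ⟪D uhat - σtilde, D (uhat - stilde)⟫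
            + ⟪σtilde - D stilde, D uhat - D stilde⟫ := by
          rw [map_sub]; rw [← inner_add_left]; congr 1; abel
      _ = ⟪σtilde - D stilde, D uhat - D stilde⟫ := by rw [horth, zero_add]
      _ ≤ ‖σtilde - D stilde‖ * ‖D uhat - D stilde‖ := real_inner_le_norm _ _
      _ = ‖D stilde - σtilde‖ * ‖D uhat - D stilde‖ := by rw [norm_sub_rev]
  calc |(ftilde - ftildeh) (utilde - stilde)|
      ≤ C * ‖D (utilde - stilde)‖ := hpert _
    _ = C * ‖(D utilde - D uhat) + (D uhat - D stilde)‖ := by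
        rw [map_sub]; congr 1; abel_nf
    _ ≤ C * (‖D utilde - D uhat‖ + ‖D uhat - D stilde‖) := by
        apply mul_le_mul_of_nonneg_left (norm_add_le _ _) hC
    _ ≤ C * (C + ‖D stilde - σtilde‖) := by
        apply mul_le_mul_of_nonneg_left (add_le_add h1 h2) hC
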